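/- arXiv:2009.13586 — 3 statements merged into one kernel-verified Lean document; each statement's English description precedes it below -/
import Mathlib

section
/- Let $s, y \in \mathbb{R}^d$ with $s \neq 0$, and let $B_t$ be a symmetric $d \times d$ matrix. Among all symmetric matrices $B$ satisfying the weak secant equation $s^T B s = s^T y$, the minimizer of the Frobenius norm $\|B - B_t\|_F$ over matrices of the form $B = B_t + \lambda\,\mathrm{Diag}(s^2)$ for $\lambda \in \mathbb{R}$ is given by $B_{t+1} = B_t + \frac{s^T y - s^T B_t s}{\|s\|_4^4} \mathrm{Diag}(s^2)$, and this matrix satisfies the weak secant equation. -/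
open Matrix Finset

/-- Among symmetric matrices of the form `B_t + λ Diag(s²)` satisfying the
weak secant equation `sᵀ B s = sᵀ y`, the Frobenius-norm minimizer is
`B_t + ((sᵀy - sᵀB_t s)/‖s‖₄⁴) Diag(s²)`, and it satisfies the weak secant equation. -/
theorem apollo_weak_secant_minimizer {n : ℕ} (s y : Fin n → ℝ) (hs : s ≠ 0)
    (Bt : Matrix (Fin n) (Fin n) ℝ) (hBt : Bt.IsSymm) :
    (s ⬝ᵥ (Bt + ((s ⬝ᵥ y - s ⬝ᵥ Bt.mulVec s) / (∑ i, s i ^ 4)) •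
        Matrix.diagonal (fun i => s i ^ 2)).mulVec s = s ⬝ᵥ y) ∧
    ∀ lam : ℝ,
      s ⬝ᵥ (Bt + lam • Matrix.diagonal (fun i => s i ^ 2)).mulVec s = s ⬝ᵥ y →
      ∑ i, ∑ j,
          ((Bt + ((s ⬝ᵥ y - s ⬝ᵥ Bt.mulVec s) / (∑ k, s k ^ 4)) •
              Matrix.diagonal (fun k => s k ^ 2)) i j - Bt i j) ^ 2 ≤
        ∑ i, ∑ j,
          ((Bt + lam • Matrix.diagonal (fun k => s k ^ 2)) i j - Bt i j) ^ 2 := by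
  set T : ℝ := ∑ i, s i ^ 4 with hT
  have hTpos : 0 < T := by
    have : ∃ i, s i ≠ 0 := by
      by_contra h
      push_neg at h
      exact hs (funext h)
    obtain ⟨i, hi⟩ := this
    exact Finset.sum_pos' (fun j _ => by positivity) ⟨i, Finset.mem_univ i, by positivity⟩
  have hTne : T ≠ 0 := ne_of_gt hTpos
  have key : ∀ c : ℝ, s ⬝ᵥ (Bt + c • Matrix.diagonal (fun i => s i ^ 2)).mulVec s
      = s ⬝ᵥ Bt.mulVec s + c * T := by
    intro c
    rw [Matrix.add_mulVec, dotProduct_add, Matrix.smul_mulVec, dotProduct_smul]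
    congr 1
    rw [smul_eq_mul, hT]
    congr 1
    simp only [mulVec_diagonal, dotProduct]
    apply Finset.sum_congr rfl
    intro i _
    ring
  set lamstar : ℝ := (s ⬝ᵥ y - s ⬝ᵥ Bt.mulVec s) / T with hls
  have hstar : s ⬝ᵥ (Bt + lamstar • Matrix.diagonal (fun i => s i ^ 2)).mulVec s = s ⬝ᵥ y := by
    rw [key, hls, div_mul_cancel₀ _ hTne]; ring
  refine ⟨hstar, ?_⟩
  intro lam hlam
  rw [key] at hlam
  have : lam = lamstar := by
    rw [hls]; field_simp
    linarith
  rw [this]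
end

section
/- (Coupled stepsize and convexity, inductive step) Consider the Apollo recursion and two hyper-parameter settings $(\eta, \sigma)$ and $(\alpha\eta, \alpha\sigma)$ with $\alpha > 0$. Suppose at step $t$ we have $\theta'_t = \theta_t$, $m'_t = m_t$, $B'_t = \alpha B_t$, and $d'_t = \frac{1}{\alpha} d_t$ with $d_t \neq 0$. Then $m'_{t+1} = m_{t+1}$, $B'_{t+1} = \alpha B_{t+1}$, $D'_{t+1} = \alpha D_{t+1}$, $d'_{t+1} = \frac{1}{\alpha} d_{t+1}$, and $\theta'_{t+1} = \theta_{t+1}$. -/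
open Finset

/-- Coupled stepsize and convexity, inductive step. If at step `t` the
two Apollo runs with hyper-parameters `(η, σ)` and `(αη, ασ)` satisfy `θ'_t = θ_t`,
`m'_t = m_t`, `B'_t = α B_t`, `d'_t = d_t/α` with `d_t ≠ 0`, then the same relations
hold at step `t+1` (diagonal matrices represented by their diagonal-entry vectors). -/
theorem apollo_coupled_inductive_step {n : ℕ}
    (gradf : (Fin n → ℝ) → (Fin n → ℝ))
    (β η σ α : ℝ) (hβ0 : 0 < β) (hβ1 : β < 1)
    (hη : 0 < η) (hσ : 0 < σ) (hα : 0 < α) (t : ℕ)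
    (θt mt Bt dt θt' mt' Bt' dt' : Fin n → ℝ)
    (hθeq : θt' = θt) (hmeq : mt' = mt) (hBeq : Bt' = α • Bt)
    (hdeq : dt' = (1 / α) • dt) (hdt : dt ≠ 0)
    (m1 B1 D1 d1 θ1 m1' B1' D1' d1' θ1' : Fin n → ℝ)
    -- unprimed recursion with (η, σ)
    (hm1 : m1 = (β * (1 - β ^ t) / (1 - β ^ (t + 1))) • mt +
      ((1 - β) / (1 - β ^ (t + 1))) • gradf θt)
    (hB1 : B1 = fun i => Bt i -
      ((∑ j, dt j * (m1 j - mt j)) + ∑ j, Bt j * dt j ^ 2) / (∑ j, dt j ^ 4) * dt i ^ 2)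
    (hD1 : D1 = fun i => max |B1 i| σ)
    (hd1 : d1 = fun i => m1 i / D1 i)
    (hθ1 : θ1 = θt - η • d1)
    -- primed recursion with (αη, ασ)
    (hm1' : m1' = (β * (1 - β ^ t) / (1 - β ^ (t + 1))) • mt' +
      ((1 - β) / (1 - β ^ (t + 1))) • gradf θt')
    (hB1' : B1' = fun i => Bt' i -
      ((∑ j, dt' j * (m1' j - mt' j)) + ∑ j, Bt' j * dt' j ^ 2) / (∑ j, dt' j ^ 4) *
        dt' i ^ 2)
    (hD1' : D1' = fun i => max |B1' i| (α * σ))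
    (hd1' : d1' = fun i => m1' i / D1' i)
    (hθ1' : θ1' = θt' - (α * η) • d1') :
    m1' = m1 ∧ B1' = α • B1 ∧ D1' = α • D1 ∧ d1' = (1 / α) • d1 ∧ θ1' = θ1 := by

  have hα0 : α ≠ 0 := ne_of_gt hα
  -- denominator positive
  obtain ⟨i0, hi0⟩ : ∃ i, dt i ≠ 0 := by
    by_contra h
    push_neg at h
    exact hdt (funext h)
  have hden : (∑ j, dt j ^ 4) ≠ 0 := by
    have hpos : 0 < ∑ j, dt j ^ 4 := by
      apply Finset.sum_pos'
      · intro j _; positivity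
      · exact ⟨i0, Finset.mem_univ i0, by positivity⟩
    exact ne_of_gt hpos
  have hm : m1' = m1 := by rw [hm1', hm1, hθeq, hmeq]
  have hB : B1' = α • B1 := by
    have e1 : (∑ j, (1 / α * dt j) * (m1 j - mt j)) =
        (1 / α) * ∑ j, dt j * (m1 j - mt j) := by
      rw [Finset.mul_sum]; exact Finset.sum_congr rfl fun j _ => by ring
    have e2 : (∑ j, α * Bt j * (1 / α * dt j) ^ 2) =
        (1 / α) * ∑ j, Bt j * dt j ^ 2 := by
      rw [Finset.mul_sum]
      refine Finset.sum_congr rfl fun j _ => ?_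
      field_simp
    have e3 : (∑ j, (1 / α * dt j) ^ 4) = (1 / α ^ 4) * ∑ j, dt j ^ 4 := by
      rw [Finset.mul_sum]; exact Finset.sum_congr rfl fun j _ => by ring
    funext i
    simp only [hB1', hB1, hBeq, hdeq, hmeq, hm, Pi.smul_apply, smul_eq_mul]
    rw [e1, e2, e3]
    field_simp
  have hσ' : 0 ≤ σ := le_of_lt hσ
  have hD : D1' = α • D1 := by
    funext i
    simp only [hD1', hD1, hB, Pi.smul_apply, smul_eq_mul, abs_mul,
      abs_of_pos hα]
    rw [← mul_max_of_nonneg _ _ (le_of_lt hα)]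
  have hDpos : ∀ i, D1 i ≠ 0 := by
    intro i
    rw [hD1]
    have : σ ≤ max |B1 i| σ := le_max_right _ _
    exact ne_of_gt (lt_of_lt_of_le hσ this)
  have hd : d1' = (1 / α) • d1 := by
    funext i
    simp only [hd1', hd1, hm, hD, Pi.smul_apply, smul_eq_mul]
    rw [mul_comm (1 / α) (m1 i / D1 i), mul_one_div, div_div, mul_comm (D1 i) α]
  refine ⟨hm, hB, hD, hd, ?_⟩
  rw [hθ1', hθ1, hθeq, hd]
  funext i
  simp only [Pi.sub_apply, Pi.smul_apply, smul_eq_mul]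
  field_simp
end

section
/- (Theorem 1, full scale invariance) Consider the Apollo recursion with zero initialization $m_0 = d_0 = 0$, $B_0 = 0$, fixed initialization $\theta_0$, and two hyper-parameter settings $(\eta, \sigma)$ and $(\eta', \sigma')$ with $\eta/\sigma = \eta'/\sigma'$ (all positive). Then the parameter trajectories coincide: $\theta_t = \theta'_t$ for all $t \ge 1$. -/
open Finset

/-- Theorem 1 (full scale invariance of Apollo). With zero initialization
and two hyper-parameter settings `(η, σ)` and `(η', σ')` with `η/σ = η'/σ'` (all
positive), the Apollo parameter trajectories coincide: `θ_t = θ'_t` for all `t ≥ 1`.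
(Diagonal matrices are represented by their diagonal-entry vectors.) -/
theorem apollo_scale_invariance {n : ℕ}
    (gradf : (Fin n → ℝ) → (Fin n → ℝ))
    (β η σ η' σ' : ℝ) (hβ0 : 0 < β) (hβ1 : β < 1)
    (hη : 0 < η) (hσ : 0 < σ) (hη' : 0 < η') (hσ' : 0 < σ')
    (hratio : η / σ = η' / σ')
    (θ0 : Fin n → ℝ)
    (m d B D θ m' d' B' D' θ' : ℕ → (Fin n → ℝ))
    (hm0 : m 0 = 0) (hd0 : d 0 = 0) (hB0 : B 0 = 0) (hθ0 : θ 0 = θ0)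
    (hm0' : m' 0 = 0) (hd0' : d' 0 = 0) (hB0' : B' 0 = 0) (hθ0' : θ' 0 = θ0)
    -- unprimed recursion with (η, σ)
    (hm : ∀ t, m (t + 1) = (β * (1 - β ^ t) / (1 - β ^ (t + 1))) • m t +
      ((1 - β) / (1 - β ^ (t + 1))) • gradf (θ t))
    (hB : ∀ t, B (t + 1) = if d t = 0 then B t else fun i => B t i -
      ((∑ j, d t j * (m (t + 1) j - m t j)) + ∑ j, B t j * d t j ^ 2) /
        (∑ j, d t j ^ 4) * d t i ^ 2)
    (hD : ∀ t, D (t + 1) = fun i => max |B (t + 1) i| σ)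
    (hd : ∀ t, d (t + 1) = fun i => m (t + 1) i / D (t + 1) i)
    (hθ : ∀ t, θ (t + 1) = θ t - η • d (t + 1))
    -- primed recursion with (η', σ')
    (hm' : ∀ t, m' (t + 1) = (β * (1 - β ^ t) / (1 - β ^ (t + 1))) • m' t +
      ((1 - β) / (1 - β ^ (t + 1))) • gradf (θ' t))
    (hB' : ∀ t, B' (t + 1) = if d' t = 0 then B' t else fun i => B' t i -
      ((∑ j, d' t j * (m' (t + 1) j - m' t j)) + ∑ j, B' t j * d' t j ^ 2) /
        (∑ j, d' t j ^ 4) * d' t i ^ 2)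
    (hD' : ∀ t, D' (t + 1) = fun i => max |B' (t + 1) i| σ')
    (hd' : ∀ t, d' (t + 1) = fun i => m' (t + 1) i / D' (t + 1) i)
    (hθ' : ∀ t, θ' (t + 1) = θ' t - η' • d' (t + 1)) :
    ∀ t : ℕ, 1 ≤ t → θ t = θ' t := by

  set α : ℝ := σ' / σ with hαdef
  have hα : 0 < α := div_pos hσ' hσ
  have hαne : α ≠ 0 := ne_of_gt hα
  have hσ'eq : σ' = α * σ := by rw [hαdef, div_mul_cancel₀ σ' (ne_of_gt hσ)]
  have hη'eq : η' = α * η := by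
    rw [hαdef]; field_simp
    field_simp at hratio
    linarith [hratio]
  have key : ∀ t : ℕ, m' t = m t ∧ B' t = α • B t ∧ d' t = α⁻¹ • d t ∧ θ' t = θ t := by
    intro t
    induction t with
    | zero =>
      refine ⟨by rw [hm0', hm0], by rw [hB0', hB0, smul_zero],
        by rw [hd0', hd0, smul_zero], by rw [hθ0', hθ0]⟩
    | succ t ih =>
      obtain ⟨ihm, ihB, ihd, ihθ⟩ := ih
      have hm2 : m' (t + 1) = m (t + 1) := by rw [hm' t, hm t, ihm, ihθ]
      have hB2 : B' (t + 1) = α • B (t + 1) := by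
        rw [hB' t, hB t]
        by_cases hz : d t = 0
        · have hz' : d' t = 0 := by rw [ihd, hz, smul_zero]
          rw [if_pos hz, if_pos hz', ihB]
        · have hz' : d' t ≠ 0 := by
            rw [ihd]
            exact smul_ne_zero (inv_ne_zero hαne) hz
          rw [if_neg hz, if_neg hz']
          have hS4 : (0:ℝ) < ∑ j, d t j ^ 4 := by
            obtain ⟨i, hi⟩ := Function.ne_iff.mp hz
            exact Finset.sum_pos' (fun j _ => by positivity)
              ⟨i, Finset.mem_univ i, by
                rw [← abs_of_nonneg (by positivity : (0:ℝ) ≤ d t i ^ 4), ← pow_abs]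
                exact pow_pos (abs_pos.mpr hi) 4⟩
          funext i
          simp only [ihd, ihB, hm2, ihm, Pi.smul_apply, smul_eq_mul]
          rw [show (∑ j, α⁻¹ * d t j * (m (t + 1) j - m t j))
              = α⁻¹ * ∑ j, d t j * (m (t + 1) j - m t j) by
            rw [Finset.mul_sum]; congr 1; funext j; ring]
          rw [show (∑ j, α * B t j * (α⁻¹ * d t j) ^ 2)
              = α⁻¹ * ∑ j, B t j * d t j ^ 2 by
            rw [Finset.mul_sum]; congr 1; funext j
            field_simp]
          rw [show (∑ j, (α⁻¹ * d t j) ^ 4) = α⁻¹ ^ 4 * ∑ j, d t j ^ 4 by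
            rw [Finset.mul_sum]; congr 1; funext j; ring]
          field_simp
      have hd2 : d' (t + 1) = α⁻¹ • d (t + 1) := by
        rw [hd' t, hD' t, hd t, hD t]
        funext i
        have hM : (0:ℝ) < max |B (t + 1) i| σ :=
          lt_of_lt_of_le hσ (le_max_right _ _)
        have habs : |B' (t + 1) i| = α * |B (t + 1) i| := by
          rw [hB2, Pi.smul_apply, smul_eq_mul, abs_mul, abs_of_pos hα]
        simp only [Pi.smul_apply, smul_eq_mul, hm2]
        rw [habs, hσ'eq, ← mul_max_of_nonneg _ _ (le_of_lt hα)]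
        field_simp
      have hθ2 : θ' (t + 1) = θ (t + 1) := by
        rw [hθ' t, hθ t, ihθ, hd2, hη'eq, smul_smul]
        congr 1
        rw [show α * η * α⁻¹ = η by field_simp]
      exact ⟨hm2, hB2, hd2, hθ2⟩
  intro t _
  exact (key t).2.2.2.symm
end
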